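/- arXiv:2310.11224 — 2 statements merged into one kernel-verified Lean document; each statement's English description precedes it below -/
import Mathlib

section
/- For every integer N ≥ 1 there exist a smooth, compactly supported, radially symmetric function η : ℝ^N → ℝ and a constant k > 0 such that η ≥ 0, η is not identically zero, the support of η is contained in the closed annulus {x : 1 ≤ |x| ≤ 2}, and −Δη(x) ≤ k·η(x) for every x ∈ ℝ^N. -/
open MeasureTheory Filter Set

noncomputable section

namespace RadCut

/-- the polynomial profile of the annulus in the variable `s = ‖x‖²` -/
def Z (s : ℝ) : ℝ := (s - 1) * (4 - s)

/-- the one-dimensional profile -/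
def g (s : ℝ) : ℝ := expNegInvGlue (Z s)

/-- formula for the first derivative of `g` -/
def G1 (s : ℝ) : ℝ := g s * (5 - 2*s) / (Z s)^2

/-- formula for the second derivative of `g` -/
def G2 (s : ℝ) : ℝ :=
  g s * ((5 - 2*s)^2 / (Z s)^4 - 2*(5 - 2*s)^2 / (Z s)^3 - 2 / (Z s)^2)

lemma Z_cont : Continuous Z := by unfold Z; continuity

lemma hasDerivAt_Z (s : ℝ) : HasDerivAt Z (5 - 2*s) s := by
  have h : HasDerivAt (fun s : ℝ => (s - 1) * (4 - s)) ((1 : ℝ) * (4 - s) + (s - 1) * (0 - 1)) s :=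
    (((hasDerivAt_id s).sub_const 1)).mul ((hasDerivAt_const s 4).sub (hasDerivAt_id s))
  exact h.congr_deriv (by ring)

lemma g_of_pos {s : ℝ} (h : 0 < Z s) : g s = Real.exp (-(Z s)⁻¹) := by
  unfold g expNegInvGlue
  rw [if_neg (not_le.2 h)]

lemma g_of_nonpos {s : ℝ} (h : Z s ≤ 0) : g s = 0 := expNegInvGlue.zero_of_nonpos h

lemma Z_nonpos_left {s : ℝ} (h : s ≤ 1) : Z s ≤ 0 := by
  unfold Z; nlinarith

lemma Z_nonpos_right {s : ℝ} (h : 4 ≤ s) : Z s ≤ 0 := by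
  unfold Z; nlinarith

lemma g_contDiff : ContDiff ℝ (⊤ : ℕ∞) g :=
  expNegInvGlue.contDiff.comp (by unfold Z; fun_prop)

lemma flat_left {f : ℝ → ℝ} {a : ℝ} (hd : DifferentiableAt ℝ f a)
    (h0 : ∀ s ∈ Iic a, f s = 0) : deriv f a = 0 :=
  (uniqueDiffOn_Iic a a Set.self_mem_Iic).eq_deriv _ hd.hasDerivAt.hasDerivWithinAt
    ((hasDerivWithinAt_const a _ (0:ℝ)).congr_of_mem (fun y hy => h0 y hy) Set.self_mem_Iic)

lemma flat_right {f : ℝ → ℝ} {a : ℝ} (hd : DifferentiableAt ℝ f a)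
    (h0 : ∀ s ∈ Ici a, f s = 0) : deriv f a = 0 :=
  (uniqueDiffOn_Ici a a Set.self_mem_Ici).eq_deriv _ hd.hasDerivAt.hasDerivWithinAt
    ((hasDerivWithinAt_const a _ (0:ℝ)).congr_of_mem (fun y hy => h0 y hy) Set.self_mem_Ici)

lemma hasDerivAt_expPart {s : ℝ} (h : Z s ≠ 0) :
    HasDerivAt (fun y => Real.exp (-(Z y)⁻¹))
      (Real.exp (-(Z s)⁻¹) * ((5 - 2*s) / (Z s)^2)) s := by
  have h1 : HasDerivAt (fun y => (Z y)⁻¹) (-(5 - 2*s) / (Z s)^2) s := (hasDerivAt_Z s).inv h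
  have h2 := h1.neg.exp
  exact h2.congr_deriv (by simp only [Pi.neg_apply]; ring)

lemma eventually_g_zero {s : ℝ} (h : Z s < 0) : ∀ᶠ y in nhds s, g y = 0 := by
  have hm : Z ⁻¹' (Iio 0) ∈ nhds s := Z_cont.continuousAt.preimage_mem_nhds (Iio_mem_nhds h)
  exact Filter.eventually_of_mem hm fun y hy => g_of_nonpos (le_of_lt hy)

lemma eventually_Z_pos {s : ℝ} (h : 0 < Z s) : ∀ᶠ y in nhds s, 0 < Z y := by
  have hm : Z ⁻¹' (Ioi 0) ∈ nhds s := Z_cont.continuousAt.preimage_mem_nhds (Ioi_mem_nhds h)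
  exact Filter.eventually_of_mem hm fun y hy => hy

lemma Z_eq_zero_cases {s : ℝ} (h : Z s = 0) : s = 1 ∨ s = 4 := by
  rcases mul_eq_zero.1 h with h1 | h1
  · left; linarith
  · right; linarith

lemma G1_of_nonpos {s : ℝ} (h : Z s ≤ 0) : G1 s = 0 := by
  unfold G1; rw [g_of_nonpos h]; simp

lemma G2_of_nonpos {s : ℝ} (h : Z s ≤ 0) : G2 s = 0 := by
  unfold G2; rw [g_of_nonpos h]; simp

lemma g_hasDerivAt (s : ℝ) : HasDerivAt g (G1 s) s := by
  rcases lt_trichotomy (Z s) 0 with h | h | h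
  · rw [G1_of_nonpos h.le]
    exact (hasDerivAt_const s 0).congr_of_eventuallyEq (eventually_g_zero h)
  · rw [G1_of_nonpos h.le]
    have hd : DifferentiableAt ℝ g s := (g_contDiff.differentiable (by simp)) s
    have : deriv g s = 0 := by
      rcases Z_eq_zero_cases h with rfl | rfl
      · exact flat_left hd fun y hy => g_of_nonpos (Z_nonpos_left hy)
      · exact flat_right hd fun y hy => g_of_nonpos (Z_nonpos_right hy)
    exact this ▸ hd.hasDerivAt
  · have hev : g =ᶠ[nhds s] fun y => Real.exp (-(Z y)⁻¹) :=
      (eventually_Z_pos h).mono fun y hy => g_of_pos hy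
    have hd := (hasDerivAt_expPart h.ne').congr_of_eventuallyEq hev
    refine hd.congr_deriv ?_
    unfold G1
    rw [g_of_pos h]
    ring

lemma deriv_g : deriv g = G1 := funext fun s => (g_hasDerivAt s).deriv

lemma G1_contDiff : ContDiff ℝ (⊤ : ℕ∞) G1 := by
  rw [← deriv_g]
  exact (contDiff_infty_iff_deriv.1 g_contDiff).2

lemma G1_hasDerivAt (s : ℝ) : HasDerivAt G1 (G2 s) s := by
  rcases lt_trichotomy (Z s) 0 with h | h | h
  · rw [G2_of_nonpos h.le]
    exact (hasDerivAt_const s 0).congr_of_eventuallyEq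
      ((eventually_g_zero h).mono fun y hy => by unfold G1; rw [hy]; simp)
  · rw [G2_of_nonpos h.le]
    have hd : DifferentiableAt ℝ G1 s := (G1_contDiff.differentiable (by simp)) s
    have : deriv G1 s = 0 := by
      rcases Z_eq_zero_cases h with rfl | rfl
      · exact flat_left hd fun y hy => G1_of_nonpos (Z_nonpos_left hy)
      · exact flat_right hd fun y hy => G1_of_nonpos (Z_nonpos_right hy)
    exact this ▸ hd.hasDerivAt
  · have hev : G1 =ᶠ[nhds s] fun y => Real.exp (-(Z y)⁻¹) * (5 - 2*y) * ((Z y)^2)⁻¹ :=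
      (eventually_Z_pos h).mono fun y hy => by
        unfold G1; rw [g_of_pos hy, div_eq_mul_inv]
    have h2 : HasDerivAt (fun y : ℝ => 5 - 2*y) (-2) s := by
      exact (((hasDerivAt_id s).const_mul 2).const_sub 5).congr_deriv (by norm_num)
    have h3 : HasDerivAt (fun y => ((Z y)^2)⁻¹)
        (-(2 * Z s ^ 1 * (5 - 2*s)) / ((Z s)^2)^2) s :=
      ((hasDerivAt_Z s).pow 2).inv (pow_ne_zero 2 h.ne')
    have hd := (((hasDerivAt_expPart h.ne').mul h2).mul h3).congr_of_eventuallyEq hev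
    refine hd.congr_deriv ?_
    unfold G2
    rw [g_of_pos h]
    have hz : Z s ≠ 0 := h.ne'
    simp only [Pi.mul_apply]
    field_simp
    ring

lemma poly_ineq (n : ℝ) (hn : 1 ≤ n) (s z : ℝ) (hs1 : 1 ≤ s) (hs4 : s ≤ 4)
    (hz : 0 < z) (hzs : z = (s - 1) * (4 - s)) :
    0 ≤ 256000*(n+1)^5 * z^4
      + 4*s*((5 - 2*s)^2 - 2*(5 - 2*s)^2*z - 2*z^2) + 2*n*(5 - 2*s)*z^2 := by
  have hw : (5 - 2*s)^2 = 9 - 4*z := by rw [hzs]; ring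
  have hz94 : z ≤ 9/4 := by nlinarith [sq_nonneg (s - 5/2)]
  have hmain : 4*s*((5 - 2*s)^2 - 2*(5 - 2*s)^2*z - 2*z^2)
      = 36*s - 88*s*z + 24*s*z^2 := by rw [hw]; ring
  rw [hmain]
  have hwlb : -3 ≤ 5 - 2*s := by linarith
  have hwub : 5 - 2*s ≤ 3 := by linarith
  have hn0 : (0:ℝ) ≤ n := by linarith
  have hKz : (0:ℝ) ≤ 256000*(n+1)^5 * z^4 := by positivity
  have hsz2 : (0:ℝ) ≤ 24*s*z^2 :=
    mul_nonneg (mul_nonneg (by norm_num) (by linarith)) (sq_nonneg z)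
  by_cases hzt : z ≤ 1/(4*(n+1))
  · have hz8 : z ≤ 1/8 := by
      have : 1/(4*(n+1)) ≤ 1/8 := by
        rw [div_le_div_iff₀ (by linarith) (by norm_num)]
        linarith
      linarith
    have hnz : n * z ≤ 1/4 := by
      have h1 : n * z ≤ n * (1/(4*(n+1))) := by nlinarith
      have h2 : n * (1/(4*(n+1))) ≤ 1/4 := by
        rw [mul_one_div, div_le_div_iff₀ (by linarith) (by norm_num)]
        linarith
      linarith
    have hb1 : -(6*n*z*z) ≤ 2*n*(5 - 2*s)*z^2 := by
      nlinarith [mul_nonneg (mul_nonneg (by linarith : (0:ℝ) ≤ 2*n) (sq_nonneg z))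
        (by linarith : (0:ℝ) ≤ 5 - 2*s + 3)]
    have hb2 : 6*n*z*z ≤ (3/2)*z := by nlinarith
    have hb3 : 88*s*z ≤ 11*s := by nlinarith
    nlinarith
  · push_neg at hzt
    have htpos : (0:ℝ) < 1/(4*(n+1)) := by positivity
    have ht4 : (1/(4*(n+1)))^4 ≤ z^4 := by
      apply pow_le_pow_left₀ htpos.le hzt.le
    have hkey : 256000*(n+1)^5 * (1/(4*(n+1)))^4 = 1000*(n+1) := by
      field_simp
      ring
    have hK : 1000*(n+1) ≤ 256000*(n+1)^5 * z^4 := by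
      calc 1000*(n+1) = 256000*(n+1)^5 * (1/(4*(n+1)))^4 := hkey.symm
        _ ≤ 256000*(n+1)^5 * z^4 := mul_le_mul_of_nonneg_left ht4 (by positivity)
    have hb1 : 88*s*z ≤ 792 := by nlinarith
    have hz2 : z^2 ≤ 81/16 := by nlinarith
    have f1 : (0:ℝ) ≤ n*(5 - 2*s + 3)*z^2 :=
      mul_nonneg (mul_nonneg hn0 (by linarith)) (sq_nonneg z)
    have f2 : (0:ℝ) ≤ n*(81/16 - z^2) := mul_nonneg hn0 (by linarith)
    nlinarith

lemma oneD (n : ℝ) (hn : 1 ≤ n) (s : ℝ) (hs : 0 ≤ s) :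
    -(4 * s * G2 s + 2 * n * G1 s) ≤ (256000*(n+1)^5) * g s := by
  rcases le_or_gt (Z s) 0 with h | h
  · rw [G1_of_nonpos h, G2_of_nonpos h, g_of_nonpos h]
    simp
  · have hs1 : 1 < s := by
      by_contra hc
      exact absurd (Z_nonpos_left (le_of_not_gt hc)) (not_le.2 h)
    have hs4 : s < 4 := by
      by_contra hc
      exact absurd (Z_nonpos_right (le_of_not_gt hc)) (not_le.2 h)
    have hgpos : 0 < g s := expNegInvGlue.pos_of_pos h
    have hz4 : (0:ℝ) < (Z s)^4 := by positivity
    have key := poly_ineq n hn s (Z s) hs1.le hs4.le h rfl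
    have expand : (256000*(n+1)^5) * g s - (-(4 * s * G2 s + 2 * n * G1 s))
        = g s / (Z s)^4 * (256000*(n+1)^5 * (Z s)^4
          + 4*s*((5 - 2*s)^2 - 2*(5 - 2*s)^2*(Z s) - 2*(Z s)^2)
          + 2*n*(5 - 2*s)*(Z s)^2) := by
      unfold G1 G2
      have hz : Z s ≠ 0 := h.ne'
      field_simp
      ring
    have hpos : 0 ≤ g s / (Z s)^4 * (256000*(n+1)^5 * (Z s)^4
          + 4*s*((5 - 2*s)^2 - 2*(5 - 2*s)^2*(Z s) - 2*(Z s)^2)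
          + 2*n*(5 - 2*s)*(Z s)^2) :=
      mul_nonneg (div_nonneg hgpos.le hz4.le) key
    linarith [expand ▸ hpos]

lemma norm_bounds {r : ℝ} (hr : 0 ≤ r) (hz : 0 < (r^2 - 1) * (4 - r^2)) : 1 ≤ r ∧ r ≤ 2 := by
  rcases mul_pos_iff.1 hz with ⟨ha, hb⟩ | ⟨ha, hb⟩
  · constructor
    · nlinarith
    · nlinarith
  · nlinarith

end RadCut

/-- Sum-of-second-partial-derivatives Laplacian of a function on `ℝ^N`. -/
def lap {N : ℕ} (f : EuclideanSpace ℝ (Fin N) → ℝ) (x : EuclideanSpace ℝ (Fin N)) : ℝ :=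
  ∑ i : Fin N, fderiv ℝ (fun y => fderiv ℝ f y (EuclideanSpace.single i 1)) x
    (EuclideanSpace.single i 1)

namespace RadCut

variable {N : ℕ}

/-- the cutoff function -/
def η (x : EuclideanSpace ℝ (Fin N)) : ℝ := g (‖x‖^2)

lemma η_hasFDerivAt (y : EuclideanSpace ℝ (Fin N)) :
    HasFDerivAt (η (N := N)) (G1 (‖y‖^2) • (2 • innerSL ℝ y)) y :=
  (g_hasDerivAt (‖y‖^2)).comp_hasFDerivAt y (hasStrictFDerivAt_norm_sq y).hasFDerivAt

lemma fderiv_η (y : EuclideanSpace ℝ (Fin N)) (i : Fin N) :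
    fderiv ℝ (η (N := N)) y (EuclideanSpace.single i 1) = G1 (‖y‖^2) * (2 * y i) := by
  rw [(η_hasFDerivAt y).fderiv]
  simp [EuclideanSpace.inner_single_right, real_inner_comm]

lemma lap_η (x : EuclideanSpace ℝ (Fin N)) :
    lap (η (N := N)) x = 4 * ‖x‖^2 * G2 (‖x‖^2) + 2 * N * G1 (‖x‖^2) := by
  have hF : ∀ i : Fin N, (fun y : EuclideanSpace ℝ (Fin N) =>
      fderiv ℝ (η (N := N)) y (EuclideanSpace.single i 1))
      = fun y => G1 (‖y‖^2) * (2 * y i) := fun i => funext fun y => fderiv_η y i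
  have hprod : ∀ i : Fin N, HasFDerivAt
      (fun y : EuclideanSpace ℝ (Fin N) => G1 (‖y‖^2) * (2 * y i))
      (G1 (‖x‖^2) • ((2:ℝ) • (EuclideanSpace.proj i : EuclideanSpace ℝ (Fin N) →L[ℝ] ℝ))
        + (2 * x i) • (G2 (‖x‖^2) • (2 • innerSL ℝ x))) x := by
    intro i
    have hA : HasFDerivAt (fun y : EuclideanSpace ℝ (Fin N) => G1 (‖y‖^2))
        (G2 (‖x‖^2) • (2 • innerSL ℝ x)) x := by
      have h := (G1_hasDerivAt (‖x‖^2)).comp_hasFDerivAt x (hasStrictFDerivAt_norm_sq x).hasFDerivAt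
      exact h
    have hB : HasFDerivAt (fun y : EuclideanSpace ℝ (Fin N) => 2 * y i)
        ((2:ℝ) • (EuclideanSpace.proj i : EuclideanSpace ℝ (Fin N) →L[ℝ] ℝ)) x :=
      (EuclideanSpace.proj i : EuclideanSpace ℝ (Fin N) →L[ℝ] ℝ).hasFDerivAt.const_mul 2
    exact hA.mul hB
  have hterm : ∀ i : Fin N,
      fderiv ℝ (fun y => fderiv ℝ (η (N := N)) y (EuclideanSpace.single i 1)) x
        (EuclideanSpace.single i 1)
      = 2 * G1 (‖x‖^2) + 4 * G2 (‖x‖^2) * (x i)^2 := by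
    intro i
    rw [hF i, (hprod i).fderiv]
    simp [EuclideanSpace.inner_single_right, real_inner_comm, EuclideanSpace.single_apply]
    ring
  unfold lap
  rw [Finset.sum_congr rfl fun i _ => hterm i]
  rw [Finset.sum_add_distrib]
  have hnorm : ∑ i : Fin N, (x i)^2 = ‖x‖^2 := by
    rw [EuclideanSpace.norm_eq x, Real.sq_sqrt (by positivity)]
    simp [sq_abs]
  rw [Finset.sum_const, ← Finset.mul_sum, Finset.card_univ, Fintype.card_fin, hnorm]
  push_cast
  ring

end RadCut

/-- Existence of a smooth, nonnegative, radially symmetric cut-off `η` supported in the annulus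
`{1 ≤ |x| ≤ 2}`, not identically zero, satisfying `-Δη ≤ k·η` for some `k > 0`. -/
theorem exists_radial_annulus_cutoff (N : ℕ) (hN : 1 ≤ N) :
    ∃ η : EuclideanSpace ℝ (Fin N) → ℝ, ∃ k : ℝ, 0 < k ∧
      ContDiff ℝ (⊤ : ℕ∞) η ∧
      HasCompactSupport η ∧
      (∀ x y : EuclideanSpace ℝ (Fin N), ‖x‖ = ‖y‖ → η x = η y) ∧
      (∀ x, 0 ≤ η x) ∧
      η ≠ 0 ∧
      tsupport η ⊆ {x : EuclideanSpace ℝ (Fin N) | 1 ≤ ‖x‖ ∧ ‖x‖ ≤ 2} ∧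
      (∀ x, -lap η x ≤ k * η x) := by
  refine ⟨RadCut.η (N := N), 256000*((N:ℝ)+1)^5, by positivity, ?_, ?_, ?_, ?_, ?_, ?_, ?_⟩
  · exact RadCut.g_contDiff.comp ((contDiff_norm_sq ℝ))
  · -- compact support
    have hsub : tsupport (RadCut.η (N := N)) ⊆ Metric.closedBall 0 2 := by
      apply closure_minimal _ Metric.isClosed_closedBall
      intro x hx
      rw [Function.mem_support] at hx
      have hz : 0 < RadCut.Z (‖x‖^2) := by
        by_contra hc
        exact hx (RadCut.g_of_nonpos (le_of_not_gt hc))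
      rw [RadCut.Z] at hz
      rw [Metric.mem_closedBall, dist_zero_right]
      exact (RadCut.norm_bounds (norm_nonneg x) hz).2
    exact IsCompact.of_isClosed_subset (isCompact_closedBall 0 2)
      (isClosed_tsupport _) hsub
  · intro x y hxy
    unfold RadCut.η
    rw [hxy]
  · intro x
    exact expNegInvGlue.nonneg _
  · -- not identically zero
    intro hzero
    set i₀ : Fin N := ⟨0, hN⟩
    set x₀ : EuclideanSpace ℝ (Fin N) := EuclideanSpace.single i₀ (Real.sqrt (5/2))
    have hx₀ : ‖x₀‖^2 = 5/2 := by
      rw [EuclideanSpace.norm_single]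
      rw [Real.norm_eq_abs, sq_abs, Real.sq_sqrt (by norm_num)]
    have hpos : 0 < RadCut.η x₀ := by
      unfold RadCut.η
      apply expNegInvGlue.pos_of_pos
      rw [RadCut.Z, hx₀]
      norm_num
    have := congrFun hzero x₀
    simp at this
    rw [this] at hpos
    exact lt_irrefl 0 hpos
  · -- support in annulus
    have hA : IsClosed {x : EuclideanSpace ℝ (Fin N) | 1 ≤ ‖x‖ ∧ ‖x‖ ≤ 2} := by
      have : {x : EuclideanSpace ℝ (Fin N) | 1 ≤ ‖x‖ ∧ ‖x‖ ≤ 2}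
          = {x | 1 ≤ ‖x‖} ∩ {x | ‖x‖ ≤ 2} := rfl
      rw [this]
      exact (isClosed_le continuous_const continuous_norm).inter
        (isClosed_le continuous_norm continuous_const)
    apply closure_minimal _ hA
    intro x hx
    rw [Function.mem_support] at hx
    have hz : 0 < RadCut.Z (‖x‖^2) := by
      by_contra hc
      exact hx (RadCut.g_of_nonpos (le_of_not_gt hc))
    rw [RadCut.Z] at hz
    exact RadCut.norm_bounds (norm_nonneg x) hz
  · -- the differential inequality
    intro x
    rw [RadCut.lap_η x]
    have hn1 : (1:ℝ) ≤ (N:ℝ) := by exact_mod_cast hN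
    have := RadCut.oneD (N:ℝ) hn1 (‖x‖^2) (by positivity)
    exact this

end
end

section
/- Let N ≥ 1, m > 1, 1 < p < m, σ > 0, and let L = σ(m−1)+2(p−1), α = (σ+2)/L. Let f be a solution of the self-similar profile equation (f^m)''(ξ) + ((N−1)/ξ)(f^m)'(ξ) − α f(ξ) + β ξ f'(ξ) + ξ^σ f(ξ)^p = 0 on (0,δ) with f^m twice continuously differentiable on [0,δ), f(0) = a > 0 and f'(0) = 0. Then (f^m)''(0) = αa/N > 0; in particular f is strictly increasing on some interval (0,ε) with ε > 0. -/
open MeasureTheory Filter Set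

noncomputable section

/-- Computation at the origin: for a solution of the self-similar profile equation on `[0,δ)`
with `f(0) = a > 0`, `f'(0) = 0` and `f^m` twice continuously differentiable up to `0`, one has
`(f^m)''(0) = α a / N > 0`; in particular `f` is strictly increasing on some interval `(0,ε)`. -/
theorem second_derivative_at_zero
    (N : ℕ) (hN : 1 ≤ N) (m p σ : ℝ) (hm : 1 < m) (hp : 1 < p) (hpm : p < m) (hσ : 0 < σ)
    (L α β : ℝ) (hL : L = σ * (m - 1) + 2 * (p - 1)) (hα : α = (σ + 2) / L)
    (hβ : β = (m - p) / L)
    (a δ : ℝ) (ha : 0 < a) (hδ : 0 < δ)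
    (f : ℝ → ℝ)
    (hf0 : f 0 = a)
    (hfc : ContinuousOn f (Set.Ico 0 δ))
    (hfnn : ∀ ξ ∈ Set.Ico (0 : ℝ) δ, 0 ≤ f ξ)
    (hfd0 : HasDerivWithinAt f 0 (Set.Ici 0) 0)
    (hreg : ContDiffOn ℝ 2 (fun s => f s ^ m) (Set.Ico 0 δ))
    (hODE : ∀ ξ ∈ Set.Ioo (0 : ℝ) δ,
      derivWithin (derivWithin (fun s => f s ^ m) (Set.Ici 0)) (Set.Ici 0) ξ
        + (((N : ℝ) - 1) / ξ) * derivWithin (fun s => f s ^ m) (Set.Ici 0) ξ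
        - α * f ξ + β * ξ * deriv f ξ + ξ ^ σ * f ξ ^ p = 0) :
    derivWithin (derivWithin (fun s => f s ^ m) (Set.Ici 0)) (Set.Ici 0) 0 = α * a / N ∧
    0 < α * a / N ∧
    ∃ ε > (0 : ℝ), StrictMonoOn f (Set.Ioo 0 ε) := by
  have hNpos : (0:ℝ) < N := by exact_mod_cast Nat.lt_of_lt_of_le Nat.zero_lt_one hN
  have hLpos : 0 < L := by rw [hL]; nlinarith
  have hαpos : 0 < α := by rw [hα]; positivity
  set g : ℝ → ℝ := fun s => f s ^ m with hg
  set U : Set ℝ := Set.Ico 0 δ with hU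
  set g1 : ℝ → ℝ := derivWithin g (Set.Ici 0) with hg1
  set c : ℝ := derivWithin g1 (Set.Ici 0) 0 with hc
  have hUuniq : UniqueDiffOn ℝ U := uniqueDiffOn_Ico 0 δ
  have mem0 : (0:ℝ) ∈ U := ⟨le_refl 0, hδ⟩
  have hsetEq : ∀ x : ℝ, x < δ → U =ᶠ[nhds x] Set.Ici (0:ℝ) := by
    intro x hx
    rw [Filter.eventuallyEq_set]
    filter_upwards [Iio_mem_nhds hx] with y hy
    simp only [hU, Set.mem_Ico, Set.mem_Ici]
    exact ⟨fun h => h.1, fun h => ⟨h, hy⟩⟩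
  have hA1 : ∀ x ∈ U, g1 x = derivWithin g U x :=
    fun x hx => (derivWithin_congr_set (hsetEq x hx.2)).symm
  have hDg1 : ContDiffOn ℝ 1 (derivWithin g U) U :=
    hreg.derivWithin hUuniq (by norm_num)
  have hg1cont : ContinuousOn g1 U :=
    hDg1.continuousOn.congr fun x hx => hA1 x hx
  have hA2 : ∀ x ∈ U, derivWithin g1 (Set.Ici 0) x = derivWithin (derivWithin g U) U x := by
    intro x hx
    rw [derivWithin_congr_set (hsetEq x hx.2).symm]
    exact derivWithin_congr (fun y hy => hA1 y hy) (hA1 x hx)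
  have hG2cont : ContinuousOn (derivWithin g1 (Set.Ici 0)) U :=
    (hDg1.continuousOn_derivWithin hUuniq le_rfl).congr fun x hx => hA2 x hx
  -- g1 0 = 0
  have hg1zero : g1 0 = 0 := by
    have hrp : HasDerivAt (fun y : ℝ => y ^ m) (m * (f 0) ^ (m - 1)) (f 0) :=
      Real.hasDerivAt_rpow_const (Or.inl (by rw [hf0]; exact ha.ne'))
    have hcomp : HasDerivWithinAt g (m * (f 0) ^ (m - 1) * 0) (Set.Ici 0) 0 :=
      hrp.comp_hasDerivWithinAt 0 hfd0
    rw [mul_zero] at hcomp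
    exact hcomp.derivWithin (uniqueDiffOn_Ici 0 0 Set.self_mem_Ici)
  -- derivative of g1 at 0 within Ici 0
  have hUmem : U ∈ nhdsWithin (0:ℝ) (Set.Ici 0) := Ico_mem_nhdsGE hδ
  have hg1der : HasDerivWithinAt g1 c (Set.Ici 0) 0 := by
    have hdiff : HasDerivWithinAt (derivWithin g U) (derivWithin (derivWithin g U) U 0) U 0 :=
      ((hDg1.differentiableOn one_ne_zero) 0 mem0).hasDerivWithinAt
    have hcU : c = derivWithin (derivWithin g U) U 0 := hA2 0 mem0
    rw [hcU]
    exact (hdiff.congr (fun y hy => hA1 y hy) (hA1 0 mem0)).mono_of_mem_nhdsWithin hUmem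
  have hslope : Tendsto (slope g1 0) (nhdsWithin 0 (Set.Ici 0 \ {0})) (nhds c) :=
    hasDerivWithinAt_iff_tendsto_slope.1 hg1der
  -- positivity of f near 0
  have hfc0 : ContinuousWithinAt f (Set.Ici 0) 0 := by
    have := hfc 0 mem0
    rwa [ContinuousWithinAt, hU, nhdsWithin_Ico_eq_nhdsGE hδ] at this
  have hev : {y : ℝ | a / 2 < f y} ∈ nhdsWithin (0:ℝ) (Set.Ici 0) := by
    apply hfc0
    rw [hf0]
    exact lt_mem_nhds (by linarith)
  obtain ⟨u, hu, husub⟩ := mem_nhdsGE_iff_exists_Ico_subset.1 hev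
  set δ₁ : ℝ := min u δ with hδ₁
  have hδ₁pos : 0 < δ₁ := lt_min hu hδ
  have hδ₁δ : δ₁ ≤ δ := min_le_right _ _
  have hfpos : ∀ y ∈ Set.Ico (0:ℝ) δ₁, a / 2 < f y := fun y hy =>
    husub ⟨hy.1, lt_of_lt_of_le hy.2 (min_le_left _ _)⟩
  -- the filter
  set l : Filter ℝ := nhdsWithin 0 (Set.Ioo 0 δ₁) with hl
  have hlU : l ≤ nhdsWithin 0 U :=
    nhdsWithin_mono 0 (fun y hy => ⟨le_of_lt hy.1, lt_of_lt_of_le hy.2 hδ₁δ⟩)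
  have hlIci : l ≤ nhdsWithin 0 (Set.Ici 0 \ {0}) :=
    nhdsWithin_mono 0 (fun y hy => ⟨le_of_lt hy.1, ne_of_gt hy.1⟩)
  have hlnhds : l ≤ nhds 0 := nhdsWithin_le_nhds
  haveI : l.NeBot := by
    rw [hl, ← mem_closure_iff_nhdsWithin_neBot, closure_Ioo hδ₁pos.ne]
    exact ⟨le_refl 0, hδ₁pos.le⟩
  -- limits
  have tf : Tendsto f l (nhds a) := by
    have := (hfc 0 mem0).mono_left hlU
    rwa [hf0] at this
  have tg : Tendsto g l (nhds (a ^ m)) := by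
    have := ((hreg.continuousOn 0 mem0).mono_left hlU)
    simp only [hg] at this ⊢
    rwa [hf0] at this
  have tg1 : Tendsto g1 l (nhds 0) := by
    have := (hg1cont 0 mem0).mono_left hlU
    rwa [hg1zero] at this
  have tG2 : Tendsto (derivWithin g1 (Set.Ici 0)) l (nhds c) :=
    (hG2cont 0 mem0).mono_left hlU
  have tid : Tendsto (fun ξ : ℝ => ξ) l (nhds 0) := tendsto_id.mono_left hlnhds
  have tslope : Tendsto (slope g1 0) l (nhds c) := hslope.mono_left hlIci
  have trpow : Tendsto (fun ξ : ℝ => ξ ^ σ) l (nhds 0) := by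
    have h0 : ContinuousAt (fun x : ℝ => x ^ σ) 0 :=
      Real.continuousAt_rpow_const 0 σ (Or.inr hσ.le)
    have := h0.tendsto.mono_left hlnhds
    rwa [Real.zero_rpow hσ.ne'] at this
  have tfp : Tendsto (fun ξ : ℝ => f ξ ^ p) l (nhds (a ^ p)) :=
    ((Real.continuousAt_rpow_const a p (Or.inl ha.ne')).tendsto).comp tf
  have tgpow : Tendsto (fun ξ : ℝ => g ξ ^ (1 / m - 1)) l (nhds ((a ^ m) ^ (1 / m - 1))) :=
    ((Real.continuousAt_rpow_const (a ^ m) (1 / m - 1)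
      (Or.inl (Real.rpow_pos_of_pos ha m).ne')).tendsto).comp tg
  -- eventual identity from the ODE
  have hIoo_mem : Set.Ioo (0:ℝ) δ₁ ∈ l := self_mem_nhdsWithin
  have heqn : ∀ᶠ ξ in l, derivWithin g1 (Set.Ici 0) ξ =
      α * f ξ - β * ξ * (g1 ξ * (1 / m) * g ξ ^ (1 / m - 1)) - ξ ^ σ * f ξ ^ p
        - ((N:ℝ) - 1) * slope g1 0 ξ := by
    filter_upwards [hIoo_mem] with ξ hξ
    have hξδ : ξ ∈ Set.Ioo (0:ℝ) δ := ⟨hξ.1, lt_of_lt_of_le hξ.2 hδ₁δ⟩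
    have hξU : ξ ∈ U := ⟨hξδ.1.le, hξδ.2⟩
    have hUnhds : U ∈ nhds ξ :=
      mem_of_superset ((isOpen_Ioo).mem_nhds hξδ) Set.Ioo_subset_Ico_self
    have hfξpos : 0 < f ξ := lt_trans (by linarith) (hfpos ξ ⟨hξ.1.le, hξ.2⟩)
    have hgξpos : 0 < g ξ := Real.rpow_pos_of_pos hfξpos m
    -- deriv f ξ in terms of g1 ξ
    have hgdiff : DifferentiableAt ℝ g ξ :=
      ((hreg.differentiableOn (by norm_num) ξ hξU).differentiableAt hUnhds)
    have hderiv_eq : deriv g ξ = g1 ξ := by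
      rw [hA1 ξ hξU, derivWithin_of_mem_nhds hUnhds]
    have hgd : HasDerivAt g (g1 ξ) ξ := hderiv_eq ▸ hgdiff.hasDerivAt
    have hfd : HasDerivAt (fun s => g s ^ (1 / m)) (g1 ξ * (1 / m) * g ξ ^ (1 / m - 1)) ξ :=
      hgd.rpow_const (Or.inl hgξpos.ne')
    have hfeq : f =ᶠ[nhds ξ] fun s => g s ^ (1 / m) := by
      filter_upwards [(isOpen_Ioo).mem_nhds hξδ] with s hs
      have hfs : 0 ≤ f s := hfnn s ⟨hs.1.le, hs.2⟩
      simp only [hg]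
      rw [← Real.rpow_mul hfs, mul_one_div_cancel (by linarith : m ≠ 0), Real.rpow_one]
    have hderf : deriv f ξ = g1 ξ * (1 / m) * g ξ ^ (1 / m - 1) :=
      (hfd.congr_of_eventuallyEq hfeq).deriv
    have hODEξ := hODE ξ hξδ
    have hslopeval : ((N:ℝ) - 1) * slope g1 0 ξ = (((N:ℝ) - 1) / ξ) * g1 ξ := by
      rw [slope_def_field, hg1zero]
      field_simp
      ring
    rw [hslopeval, ← hderf]
    simp only [hg1, hg] at hODEξ ⊢
    linarith
  -- take limits
  have tRHS : Tendsto (fun ξ => α * f ξ - β * ξ * (g1 ξ * (1 / m) * g ξ ^ (1 / m - 1))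
      - ξ ^ σ * f ξ ^ p - ((N:ℝ) - 1) * slope g1 0 ξ) l
      (nhds (α * a - β * 0 * (0 * (1 / m) * (a ^ m) ^ (1 / m - 1)) - 0 * a ^ p
        - ((N:ℝ) - 1) * c)) := by
    exact ((((tf.const_mul α).sub
      (((tid.const_mul β).mul ((tg1.mul tendsto_const_nhds).mul tgpow)))).sub
      (trpow.mul tfp)).sub (tslope.const_mul ((N:ℝ) - 1)))
  have hkey : c = α * a - ((N:ℝ) - 1) * c := by
    have h1 := tendsto_nhds_unique (tG2.congr' heqn) tRHS
    linear_combination h1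
  have hcval : c = α * a / N := by
    have : (N:ℝ) * c = α * a := by linear_combination hkey
    field_simp
    linarith [this]
  have hcpos : 0 < α * a / (N:ℝ) := div_pos (mul_pos hαpos ha) hNpos
  refine ⟨hcval, hcpos, ?_⟩
  -- strict monotonicity
  have hcpos' : 0 < c := hcval ▸ hcpos
  have hslopeIoi : Tendsto (slope g1 0) (nhdsWithin 0 (Set.Ioi (0:ℝ))) (nhds c) :=
    hslope.mono_left (nhdsWithin_mono 0 (fun y hy => ⟨Set.mem_Ici.2 (le_of_lt hy), ne_of_gt hy⟩))
  have hposev : {ξ : ℝ | 0 < slope g1 0 ξ} ∈ nhdsWithin (0:ℝ) (Set.Ioi 0) :=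
    hslopeIoi (lt_mem_nhds hcpos')
  obtain ⟨v, hv, hvsub⟩ := mem_nhdsGT_iff_exists_Ioo_subset.1 hposev
  set ε : ℝ := min v δ₁ with hε
  have hεpos : 0 < ε := lt_min hv hδ₁pos
  refine ⟨ε, hεpos, ?_⟩
  have hεδ : ε ≤ δ := le_trans (min_le_right _ _) hδ₁δ
  have hg1pos : ∀ x ∈ Set.Ioo (0:ℝ) ε, 0 < g1 x := by
    intro x hx
    have hx' : 0 < slope g1 0 x := hvsub ⟨hx.1, lt_of_lt_of_le hx.2 (min_le_left _ _)⟩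
    rw [slope_def_field, hg1zero] at hx'
    have := mul_pos hx' hx.1
    rwa [sub_zero, sub_zero, div_mul_cancel₀ _ hx.1.ne'] at this
  have hgmono : StrictMonoOn g (Set.Ioo 0 ε) := by
    apply strictMonoOn_of_deriv_pos (convex_Ioo 0 ε)
    · exact (hreg.continuousOn).mono (fun y hy => ⟨hy.1.le, lt_of_lt_of_le hy.2 hεδ⟩)
    · intro x hx
      rw [interior_Ioo] at hx
      have hIci : Set.Ici (0:ℝ) ∈ nhds x := Ici_mem_nhds hx.1
      have : deriv g x = g1 x := (derivWithin_of_mem_nhds hIci).symm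
      rw [this]
      exact hg1pos x hx
  intro x hx y hy hxy
  have hxU : x ∈ Set.Ico (0:ℝ) δ := ⟨hx.1.le, lt_of_lt_of_le hx.2 hεδ⟩
  have hyU : y ∈ Set.Ico (0:ℝ) δ := ⟨hy.1.le, lt_of_lt_of_le hy.2 hεδ⟩
  have hrec : ∀ z ∈ Set.Ico (0:ℝ) δ, f z = g z ^ (1 / m) := by
    intro z hz
    simp only [hg]
    rw [← Real.rpow_mul (hfnn z hz), mul_one_div_cancel (by linarith : m ≠ 0), Real.rpow_one]
  rw [hrec x hxU, hrec y hyU]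
  exact Real.rpow_lt_rpow (Real.rpow_nonneg (hfnn x hxU) m) (hgmono hx hy hxy)
    (by positivity)

end
end
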